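/- Let G be a finite simple connected graph on n ≥ 3 vertices containing a leaf (a vertex w of degree 1 with unique neighbour v). Then every connected dominating set of G contains v, and the map D ↦ D ∪ {w} is a bijection between connected dominating sets of G not containing w and connected dominating sets of G containing w. Consequently Σ_D (-1)^{|D|} over connected dominating sets D of G equals 0. -/

import Mathlib

open Finset

attribute [local instance] Classical.propDecidable

/-- `D` is a connected dominating set of `G`. -/
def ConnDomSet {V : Type*} (G : SimpleGraph V) (D : Finset V) : Prop :=
  D.Nonempty ∧ (G.induce (D : Set V)).Connected ∧
    ∀ v : V, v ∈ D ∨ ∃ u ∈ D, G.Adj u v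

/-- If `w` has unique neighbour `v`, any path between vertices different
from `w` avoids `w`. -/
lemma walk_avoid_leaf {W : Type*} {H : SimpleGraph W} {w v : W}
    (huniq : ∀ u : W, H.Adj u w → u = v) {a b : W} (p : H.Walk a b)
    (hp : p.IsPath) (ha : a ≠ w) (hb : b ≠ w) : w ∉ p.support := by
  intro hw
  have hspec := p.take_spec hw
  set q := p.takeUntil w hw with hq
  set r := p.dropUntil w hw with hr
  have hnodup : (q.support ++ r.support.tail).Nodup := by
    have := hp.support_nodup
    rwa [← hspec, SimpleGraph.Walk.support_append] at this
  have hvq : v ∈ q.support := by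
    obtain ⟨u, h, q', hq'⟩ := SimpleGraph.Walk.not_nil_iff.mp
      (SimpleGraph.Walk.not_nil_of_ne (fun h => ha h.symm) (p := q.reverse))
    have huv : u = v := huniq u h.symm
    have hm : u ∈ q.reverse.support := by
      rw [hq', SimpleGraph.Walk.support_cons]
      exact List.mem_cons_of_mem _ q'.start_mem_support
    rw [huv] at hm
    rwa [SimpleGraph.Walk.support_reverse, List.mem_reverse] at hm
  have hvr : v ∈ r.support.tail := by
    obtain ⟨u, h, r', hr'⟩ := SimpleGraph.Walk.not_nil_iff.mp
      (SimpleGraph.Walk.not_nil_of_ne (fun h => hb h.symm) (p := r))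
    have huv : u = v := huniq u h.symm
    rw [← huv, hr', SimpleGraph.Walk.support_cons]
    exact r'.start_mem_support
  exact (List.nodup_append'.mp hnodup).2.2 hvq hvr

theorem leaf_implies_signed_count_zero
    {V : Type*} [Fintype V] [DecidableEq V] (G : SimpleGraph V)
    (hconn : G.Connected) (hcard : 3 ≤ Fintype.card V)
    (v w : V) (hadj : G.Adj v w)
    (huniq : ∀ u : V, G.Adj u w → u = v) :
    (∀ D : Finset V, ConnDomSet G D → v ∈ D) ∧
    Set.BijOn (fun D => insert w D)
      {D : Finset V | ConnDomSet G D ∧ w ∉ D}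
      {D : Finset V | ConnDomSet G D ∧ w ∈ D} ∧
    (∑ D : Finset V, if ConnDomSet G D then (-1 : ℤ) ^ D.card else 0) = 0 := by
  have hvw : v ≠ w := hadj.ne
  -- Part 1
  have part1 : ∀ D : Finset V, ConnDomSet G D → v ∈ D := by
    intro D hD
    obtain ⟨hne, hconnD, hdom⟩ := hD
    rcases hdom w with hwD | ⟨u, huD, huw⟩
    · -- w ∈ D : find another element of D
      have hex : ∃ x ∈ D, x ≠ w := by
        by_contra hcon
        push_neg at hcon
        have hall : ∀ x : V, x = w ∨ x = v := by
          intro x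
          rcases hdom x with hx | ⟨u, huD, hux⟩
          · exact Or.inl (hcon x hx)
          · obtain rfl : u = w := hcon u huD
            exact Or.inr (huniq x hux.symm)
        have hsub : (Finset.univ : Finset V) ⊆ {w, v} := by
          intro x _
          rcases hall x with h | h <;> simp [h]
        have := Finset.card_le_card hsub
        have h2 : ({w, v} : Finset V).card ≤ 2 := Finset.card_insert_le _ _ |>.trans (by simp)
        rw [Finset.card_univ] at this
        omega
      obtain ⟨x, hxD, hxw⟩ := hex
      obtain ⟨p⟩ := hconnD.preconnected ⟨w, by simpa using hwD⟩ ⟨x, by simpa using hxD⟩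
      obtain ⟨⟨u, huD2⟩, h, q, hpq⟩ := SimpleGraph.Walk.not_nil_iff.mp
        (SimpleGraph.Walk.not_nil_of_ne (p := p) (by simp [Subtype.ext_iff]; exact fun h => hxw h.symm))
      have hadj' : G.Adj w u := h
      have huv : u = v := huniq _ hadj'.symm
      rw [huv] at huD2
      simpa using huD2
    · obtain rfl : u = v := huniq u huw
      exact huD
  have hmaps : Set.MapsTo (fun D => insert w D)
        {D : Finset V | ConnDomSet G D ∧ w ∉ D} {D : Finset V | ConnDomSet G D ∧ w ∈ D} := by
    rintro D ⟨⟨hne, hc, hdom⟩, hwD⟩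
    have hvD := part1 D ⟨hne, hc, hdom⟩
    refine ⟨⟨⟨w, mem_insert_self _ _⟩, ?_, ?_⟩, mem_insert_self _ _⟩
    · have hsing : (G.induce ({w} : Set V)).Connected := by
        rw [SimpleGraph.connected_iff_exists_forall_reachable]
        refine ⟨⟨w, rfl⟩, ?_⟩
        rintro ⟨x, hx⟩
        obtain rfl : x = w := hx
        exact SimpleGraph.Reachable.refl _
      have := G.connected_induce_union hc.preconnected hsing.preconnected (by simpa using hvD)
        (Set.mem_singleton w) hadj
      rwa [Finset.coe_insert, Set.insert_eq, Set.union_comm]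
    · intro x
      rcases hdom x with hx | ⟨u, huD, hux⟩
      · exact Or.inl (mem_insert_of_mem hx)
      · exact Or.inr ⟨u, mem_insert_of_mem huD, hux⟩
  have hinj : Set.InjOn (fun D => insert w D) {D : Finset V | ConnDomSet G D ∧ w ∉ D} := by
    rintro D1 ⟨_, h1⟩ D2 ⟨_, h2⟩ h
    have := congrArg (fun s => Finset.erase s w) h
    simpa [Finset.erase_insert h1, Finset.erase_insert h2] using this
  have hsurj : Set.SurjOn (fun D => insert w D)
      {D : Finset V | ConnDomSet G D ∧ w ∉ D} {D : Finset V | ConnDomSet G D ∧ w ∈ D} := by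
    rintro D' ⟨⟨hne, hc, hdom⟩, hwD'⟩
    have hvD' := part1 D' ⟨hne, hc, hdom⟩
    have hvE : v ∈ D'.erase w := Finset.mem_erase.mpr ⟨hvw, hvD'⟩
    refine ⟨D'.erase w, ⟨⟨⟨v, hvE⟩, ?_, ?_⟩, Finset.notMem_erase _ _⟩, Finset.insert_erase hwD'⟩
    · -- connectivity of the erased set
      have hcoe : (↑(D'.erase w) : Set V) = (↑D' : Set V) \ {w} := by
        ext x; simp [Finset.mem_erase, and_comm]
      rw [hcoe]
      apply G.induce_connected_of_patches v (by simpa using Finset.mem_erase.mp hvE |>.symm)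
      intro x hx
      obtain ⟨hxD', hxw⟩ : x ∈ (↑D' : Set V) ∧ x ≠ w := ⟨hx.1, hx.2⟩
      -- a path in the induced graph on D' from v to x
      obtain ⟨p0⟩ := hc.preconnected ⟨v, by simpa using hvD'⟩ ⟨x, hxD'⟩
      let p : (G.induce (↑D' : Set V)).Walk ⟨v, by simpa using hvD'⟩ ⟨x, hxD'⟩ := p0.toPath
      have hp : p.IsPath := p0.toPath.2
      have huniq' : ∀ u : (↑D' : Set V), (G.induce (↑D' : Set V)).Adj u ⟨w, by simpa using hwD'⟩ →
          u = ⟨v, by simpa using hvD'⟩ := by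
        rintro u hu
        exact Subtype.ext (huniq u.val hu)
      have hwp : (⟨w, by simpa using hwD'⟩ : (↑D' : Set V)) ∉ p.support :=
        walk_avoid_leaf huniq' p hp (by simp [Subtype.ext_iff, hvw])
          (by simp [Subtype.ext_iff]; exact hxw)
      -- map the walk down to G
      let f := (SimpleGraph.Embedding.induce (G := G) (↑D' : Set V)).toHom
      let q : G.Walk v x := p.map f
      have hqsupp : ∀ y ∈ q.support, y ∈ (↑D' : Set V) \ {w} := by
        intro y hy
        replace hy : y ∈ (p.map f).support := hy
        rw [SimpleGraph.Walk.support_map, List.mem_map] at hy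
        obtain ⟨z, hz, rfl⟩ := hy
        refine ⟨z.2, ?_⟩
        intro hzw
        exact hwp (by rwa [show z = ⟨w, by simpa using hwD'⟩ from Subtype.ext hzw] at hz)
      refine ⟨{y | y ∈ q.support}, hqsupp, q.start_mem_support, q.end_mem_support, ?_⟩
      exact (q.connected_induce_support.preconnected _ _)
    · -- domination
      intro x
      by_cases hxw : x = w
      · subst hxw
        exact Or.inr ⟨v, hvE, hadj⟩
      rcases hdom x with hx | ⟨u, huD, hux⟩
      · exact Or.inl (Finset.mem_erase.mpr ⟨hxw, hx⟩)
      by_cases huw : u = w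
      · subst huw
        obtain rfl : x = v := huniq x hux.symm
        exact Or.inl hvE
      · exact Or.inr ⟨u, Finset.mem_erase.mpr ⟨huw, huD⟩, hux⟩
  refine ⟨part1, ⟨hmaps, hinj, hsurj⟩, ?_⟩
  · -- the signed sum
    classical
    set A := Finset.univ.filter (fun D : Finset V => ConnDomSet G D ∧ w ∉ D) with hA
    set B := Finset.univ.filter (fun D : Finset V => ConnDomSet G D ∧ w ∈ D) with hB
    have hsplit : (∑ D : Finset V, if ConnDomSet G D then (-1 : ℤ) ^ D.card else 0)
        = ∑ D ∈ A, (-1 : ℤ) ^ D.card + ∑ D ∈ B, (-1 : ℤ) ^ D.card := by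
      rw [← Finset.sum_filter]
      rw [← Finset.sum_filter_add_sum_filter_not (Finset.univ.filter fun D => ConnDomSet G D)
        (fun D => w ∉ D)]
      congr 1
      · congr 1
        rw [hA, Finset.filter_filter]
      · congr 1
        rw [hB, Finset.filter_filter]
        apply Finset.filter_congr
        intro D _
        simp [not_not]
    have hBA : ∑ D ∈ B, (-1 : ℤ) ^ D.card = ∑ D ∈ A, (-1 : ℤ) ^ (insert w D).card := by
      refine (Finset.sum_bij (fun D _ => insert w D) ?_ ?_ ?_ ?_).symm
      · intro D hD
        simp only [hA, Finset.mem_filter, Finset.mem_univ, true_and] at hD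
        have := hmaps hD
        simp only [hB, Finset.mem_filter, Finset.mem_univ, true_and]
        exact this
      · intro D1 h1 D2 h2 h
        simp only [hA, Finset.mem_filter, Finset.mem_univ, true_and] at h1 h2
        exact hinj h1 h2 h
      · intro D hD
        simp only [hB, Finset.mem_filter, Finset.mem_univ, true_and] at hD
        obtain ⟨E, hE, hEeq⟩ := hsurj hD
        exact ⟨E, by simp [hA, Finset.mem_filter, hE.1, hE.2], hEeq⟩
      · intro D _
        rfl
    rw [hsplit, hBA, ← Finset.sum_add_distrib]
    apply Finset.sum_eq_zero
    intro D hD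
    simp only [hA, Finset.mem_filter, Finset.mem_univ, true_and] at hD
    rw [Finset.card_insert_of_notMem hD.2, pow_succ]
    ring
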